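/- Let m₂(L,L) = Γ A B₁ Aᵀ Γᵀ and m₂(L,−L) = (−1)^L Γ A B₂ Aᵀ Γᵀ, where Γ has full column rank, A is invertible, B₁, B₂ are invertible, and B₁B₂⁻¹ has distinct eigenvalues with eigendecomposition Q D Q⁻¹. Suppose further b = Q⁻¹β has no zero entries and m₁ = Γ A β is given. Then the pair (m₁, m₂(L,L), m₂(L,−L)) uniquely determines the matrix A (given Γ, B₁, B₂, β known). -/
import Mathlib


open Matrix

lemma mulVec_inj_of_rank {T n : ℕ} (Γ : Matrix (Fin T) (Fin n) ℂ) (hΓ : Γ.rank = n) :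
    Function.Injective Γ.mulVec := by
  rw [← Matrix.coe_mulVecLin]
  rw [← LinearMap.ker_eq_bot]
  have h := LinearMap.finrank_range_add_finrank_ker Γ.mulVecLin
  rw [Matrix.rank] at hΓ
  rw [hΓ] at h
  simp only [Module.finrank_fintype_fun_eq_card, Fintype.card_fin] at h
  have hk : Module.finrank ℂ (LinearMap.ker Γ.mulVecLin) = 0 := by omega
  exact Submodule.finrank_eq_zero.mp hk

lemma cancel_left {T n m : ℕ} (Γ : Matrix (Fin T) (Fin n) ℂ) (hΓ : Γ.rank = n)
    {M N : Matrix (Fin n) (Fin m) ℂ} (h : Γ * M = Γ * N) : M = N := by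
  have hinj := mulVec_inj_of_rank Γ hΓ
  ext i j
  have hv : Γ.mulVec (M.mulVec (Pi.single j 1)) = Γ.mulVec (N.mulVec (Pi.single j 1)) := by
    rw [Matrix.mulVec_mulVec, Matrix.mulVec_mulVec, h]
  have := congrFun (hinj hv) i
  simpa [Matrix.mulVec_single] using this

lemma cancel_both {T n : ℕ} (Γ : Matrix (Fin T) (Fin n) ℂ) (hΓ : Γ.rank = n)
    {M N : Matrix (Fin n) (Fin n) ℂ} (h : Γ * M * Γᵀ = Γ * N * Γᵀ) : M = N := by
  rw [Matrix.mul_assoc, Matrix.mul_assoc] at h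
  have h1 : M * Γᵀ = N * Γᵀ := cancel_left Γ hΓ h
  have h2 : Γ * Mᵀ = Γ * Nᵀ := by
    have := congrArg Matrix.transpose h1
    simpa [Matrix.transpose_mul] using this
  have := cancel_left Γ hΓ h2
  simpa using congrArg Matrix.transpose this

/-- Abstract key uniqueness step of Theorem 3.1 (known totally non-uniform distribution):
the moments `m₁ = Γ A β`, `m₂(L,L) = Γ A B₁ Aᵀ Γᵀ` and `m₂(L,−L) = (−1)^L Γ A B₂ Aᵀ Γᵀ`
uniquely determine `A`, given `Γ` of full column rank, `A` invertible, `B₁, B₂` invertible,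
`B₁B₂⁻¹ = Q D Q⁻¹` with pairwise distinct eigenvalues, and `Q⁻¹β` with no zero entries. -/
theorem stmt12 {T n : ℕ} (L : ℕ)
    (Γ : Matrix (Fin T) (Fin n) ℂ)
    (A A' B1 B2 Q : Matrix (Fin n) (Fin n) ℂ)
    (d : Fin n → ℂ) (β : Fin n → ℂ)
    (hTn : n ≤ T) (hΓ : Γ.rank = n)
    (hA : IsUnit A) (hA' : IsUnit A')
    (hB1 : IsUnit B1) (hB2 : IsUnit B2) (hQ : IsUnit Q)
    (heig : B1 * B2⁻¹ = Q * Matrix.diagonal d * Q⁻¹)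
    (hdist : Function.Injective d)
    (hb : ∀ i, (Q⁻¹).mulVec β i ≠ 0)
    (h2a : Γ * A * B1 * Aᵀ * Γᵀ = Γ * A' * B1 * A'ᵀ * Γᵀ)
    (h2b : ((-1:ℂ)^L) • (Γ * A * B2 * Aᵀ * Γᵀ) = ((-1:ℂ)^L) • (Γ * A' * B2 * A'ᵀ * Γᵀ))
    (h1 : Γ.mulVec (A.mulVec β) = Γ.mulVec (A'.mulVec β)) :
    A = A' := by
  haveI := hA.invertible
  haveI := hA'.invertible
  haveI := hB1.invertible
  haveI := hB2.invertible
  haveI := hQ.invertible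
  haveI := Matrix.invertibleTranspose A
  haveI := Matrix.invertibleTranspose A'
  -- remove the scalar in h2b
  have hL : ((-1:ℂ)^L) ≠ 0 := pow_ne_zero _ (by norm_num)
  have h2b' : Γ * A * B2 * Aᵀ * Γᵀ = Γ * A' * B2 * A'ᵀ * Γᵀ :=
    smul_right_injective _ hL h2b
  -- cancel Γ
  have e1 : A * B1 * Aᵀ = A' * B1 * A'ᵀ := by
    apply cancel_both Γ hΓ
    simpa [Matrix.mul_assoc] using h2a
  have e2 : A * B2 * Aᵀ = A' * B2 * A'ᵀ := by
    apply cancel_both Γ hΓ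
    simpa [Matrix.mul_assoc] using h2b'
  have eβ : A.mulVec β = A'.mulVec β :=
    mulVec_inj_of_rank Γ hΓ h1
  -- set M = A'⁻¹ * A ; show M commutes with C = B1 * B2⁻¹
  set M := A'⁻¹ * A with hM
  have f1 : M * B1 * Aᵀ = B1 * A'ᵀ := by
    rw [hM, Matrix.mul_assoc, Matrix.mul_assoc, ← Matrix.mul_assoc A B1 Aᵀ, e1,
      ← Matrix.mul_assoc, ← Matrix.mul_assoc, Matrix.inv_mul_of_invertible, Matrix.one_mul]
  have f2 : M * B2 * Aᵀ = B2 * A'ᵀ := by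
    rw [hM, Matrix.mul_assoc, Matrix.mul_assoc, ← Matrix.mul_assoc A B2 Aᵀ, e2,
      ← Matrix.mul_assoc, ← Matrix.mul_assoc, Matrix.inv_mul_of_invertible, Matrix.one_mul]
  have hAt : Aᵀ = B2⁻¹ * (M⁻¹ * (B2 * A'ᵀ)) := by
    rw [← f2]
    haveI : Invertible M := by rw [hM]; exact invertibleMul _ _
    rw [Matrix.mul_assoc M B2 Aᵀ, Matrix.inv_mul_cancel_left_of_invertible,
      Matrix.inv_mul_cancel_left_of_invertible]
  have hcomm : M * (B1 * B2⁻¹) = (B1 * B2⁻¹) * M := by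
    haveI : Invertible M := by rw [hM]; exact invertibleMul _ _
    have := f1
    rw [hAt] at this
    -- this : M * B1 * (B2⁻¹ * (M⁻¹ * (B2 * A'ᵀ))) = B1 * A'ᵀ
    have h3 : M * B1 * B2⁻¹ * M⁻¹ * B2 * A'ᵀ = B1 * A'ᵀ := by
      calc M * B1 * B2⁻¹ * M⁻¹ * B2 * A'ᵀ
          = M * B1 * (B2⁻¹ * (M⁻¹ * (B2 * A'ᵀ))) := by
            simp only [Matrix.mul_assoc]
        _ = B1 * A'ᵀ := this
    have h4 : M * B1 * B2⁻¹ * M⁻¹ * B2 = B1 := by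
      have := congrArg (· * A'ᵀ⁻¹) h3
      simpa [Matrix.mul_inv_cancel_right_of_invertible] using this
    have h5 : M * (B1 * B2⁻¹) * M⁻¹ = B1 * B2⁻¹ := by
      have := congrArg (· * B2⁻¹) h4
      simpa [Matrix.mul_inv_cancel_right_of_invertible, Matrix.mul_assoc] using this
    calc M * (B1 * B2⁻¹) = M * (B1 * B2⁻¹) * M⁻¹ * M := by
          rw [Matrix.inv_mul_cancel_right_of_invertible]
      _ = (B1 * B2⁻¹) * M := by rw [h5]
  -- pass to P = Q⁻¹ M Q
  set P := Q⁻¹ * M * Q with hP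
  have hPD : P * Matrix.diagonal d = Matrix.diagonal d * P := by
    rw [heig] at hcomm
    have h6 : Q⁻¹ * (M * (Q * Matrix.diagonal d * Q⁻¹)) * Q
        = Q⁻¹ * (Q * Matrix.diagonal d * Q⁻¹ * M) * Q := by rw [hcomm]
    calc P * Matrix.diagonal d
        = Q⁻¹ * M * Q * Matrix.diagonal d * (Q⁻¹ * Q) := by
          rw [Matrix.inv_mul_of_invertible, Matrix.mul_one]
      _ = Q⁻¹ * (M * (Q * Matrix.diagonal d * Q⁻¹)) * Q := by
          simp only [Matrix.mul_assoc]
      _ = Q⁻¹ * (Q * Matrix.diagonal d * Q⁻¹ * M) * Q := h6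
      _ = (Q⁻¹ * Q) * Matrix.diagonal d * (Q⁻¹ * M * Q) := by
          simp only [Matrix.mul_assoc]
      _ = Matrix.diagonal d * P := by
          rw [Matrix.inv_mul_of_invertible, Matrix.one_mul]
  -- off-diagonal entries of P vanish
  have hoff : ∀ i j, i ≠ j → P i j = 0 := by
    intro i j hij
    have := congrFun (congrFun hPD i) j
    rw [Matrix.mul_diagonal, Matrix.diagonal_mul] at this
    have hd : d j ≠ d i := fun h => hij (hdist h).symm
    have : P i j * (d j - d i) = 0 := by ring_nf; linear_combination this
    rcases mul_eq_zero.mp this with h | h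
    · exact h
    · exact absurd (sub_eq_zero.mp h) hd
  -- M β = β
  have hMβ : M.mulVec β = β := by
    rw [hM, ← Matrix.mulVec_mulVec, eβ, Matrix.mulVec_mulVec,
      Matrix.inv_mul_of_invertible, Matrix.one_mulVec]
  -- P b = b with b = Q⁻¹ β
  have hq : Q.mulVec ((Q⁻¹).mulVec β) = β := by
    rw [Matrix.mulVec_mulVec, Matrix.mul_inv_of_invertible, Matrix.one_mulVec]
  have hPb : P.mulVec ((Q⁻¹).mulVec β) = (Q⁻¹).mulVec β := by
    rw [hP, ← Matrix.mulVec_mulVec, ← Matrix.mulVec_mulVec, hq, hMβ]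
  -- diagonal entries of P are 1
  have hdiag : ∀ i, P i i = 1 := by
    intro i
    have hrow := congrFun hPb i
    rw [Matrix.mulVec, dotProduct] at hrow
    have hsum : ∑ j, P i j * (Q⁻¹).mulVec β j = P i i * (Q⁻¹).mulVec β i := by
      rw [Finset.sum_eq_single i]
      · intro j _ hji; rw [hoff i j (Ne.symm hji), zero_mul]
      · intro h; exact absurd (Finset.mem_univ i) h
    rw [hsum] at hrow
    have h1b : P i i * (Q⁻¹).mulVec β i = 1 * (Q⁻¹).mulVec β i := by
      rw [hrow, one_mul]
    exact mul_right_cancel₀ (hb i) h1b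
  have hP1 : P = 1 := by
    ext i j
    by_cases hij : i = j
    · subst hij; rw [hdiag]; simp
    · rw [hoff i j hij]; simp [Matrix.one_apply_ne hij]
  have hM1 : M = 1 := by
    have : Q⁻¹ * M * Q = 1 := hP1
    have h7 := congrArg (fun X => Q * X * Q⁻¹) this
    simpa [Matrix.mul_assoc, Matrix.mul_inv_of_invertible, Matrix.mul_one,
      Matrix.mul_inv_cancel_left_of_invertible] using h7
  have := congrArg (fun X => A' * X) hM1
  simpa [hM, Matrix.mul_inv_cancel_left_of_invertible, Matrix.mul_one] using this
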